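/- arXiv:2209.12783 — 5 statements merged into one kernel-verified Lean document; each statement's English description precedes it below -/
import Mathlib

section
/- For an n×n positive definite Hermitian matrix A with all eigenvalues at least 1, a vector v ∈ ℂⁿ, and a scalar α ≥ 0, it holds that det(A + α v vᴴ) = det(A)·(1 + α vᴴ A⁻¹ v) ≥ det(A) + α ‖v‖². -/
open Matrix ComplexOrder

theorem det_add_smul_vecMulVec
    {n : ℕ} (A : Matrix (Fin n) (Fin n) ℂ) (hA : A.PosDef)
    (heig : ∀ i, 1 ≤ hA.1.eigenvalues i)
    (v : Fin n → ℂ) (α : ℝ) (hα : 0 ≤ α) :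
    (A + (α : ℂ) • vecMulVec v (star v)).det
      = A.det * (1 + (α : ℂ) * (star v ⬝ᵥ (A⁻¹ *ᵥ v))) ∧
    A.det.re + α * (∑ i, ‖v i‖ ^ 2)
      ≤ ((A + (α : ℂ) • vecMulVec v (star v)).det).re := by
  have hdetA : IsUnit A.det := hA.det_pos.ne'.isUnit
  set L := hA.1.eigenvalues with hL
  have hLpos : ∀ i, (0:ℝ) < L i := hA.eigenvalues_pos
  -- Part 1: matrix determinant lemma
  have key : (A + (α : ℂ) • vecMulVec v (star v)).det
      = A.det * (1 + (α : ℂ) * (star v ⬝ᵥ (A⁻¹ *ᵥ v))) := by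
    have h1 : (α : ℂ) • vecMulVec v (star v)
        = replicateCol Unit ((α : ℂ) • v) * replicateRow Unit (star v) := by
      rw [← vecMulVec_eq]
      ext i j
      simp [vecMulVec_apply, mul_assoc]
    rw [h1, det_add_replicateCol_mul_replicateRow hdetA]
    congr 1
    rw [det_unique]
    simp [Matrix.add_apply, Matrix.mul_apply, dotProduct, mulVec, Finset.mul_sum,
      Finset.sum_mul]
    rw [Finset.sum_comm]
    exact Finset.sum_congr rfl fun x _ => Finset.sum_congr rfl fun y _ => by ring
  refine ⟨key, ?_⟩
  -- spectral decomposition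
  set U : Matrix (Fin n) (Fin n) ℂ := (hA.1.eigenvectorUnitary : Matrix (Fin n) (Fin n) ℂ) with hU
  have hUU : U * star U = 1 := (Matrix.mem_unitaryGroup_iff).mp hA.1.eigenvectorUnitary.2
  have hUU' : star U * U = 1 := (Matrix.mem_unitaryGroup_iff').mp hA.1.eigenvectorUnitary.2
  have hspec : A = U * diagonal (Complex.ofReal ∘ L) * star U := hA.1.spectral_theorem
  have hinv : A⁻¹ = U * diagonal (fun i => ((L i : ℂ))⁻¹) * star U := by
    refine (inv_eq_right_inv ?_)
    rw [hspec]
    calc U * diagonal (Complex.ofReal ∘ L) * star U * (U * diagonal (fun i => ((L i : ℂ))⁻¹) * star U)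
        = U * diagonal (Complex.ofReal ∘ L) * (star U * U) * diagonal (fun i => ((L i : ℂ))⁻¹) * star U := by
          noncomm_ring
      _ = U * (diagonal (Complex.ofReal ∘ L) * diagonal (fun i => ((L i : ℂ))⁻¹)) * star U := by
          rw [hUU']; noncomm_ring
      _ = 1 := by
          rw [diagonal_mul_diagonal]
          have : (fun i => (Complex.ofReal ∘ L) i * ((L i : ℂ))⁻¹) = fun _ => (1:ℂ) := by
            funext i
            have : (L i : ℂ) ≠ 0 := by exact_mod_cast (hLpos i).ne'
            simp [Function.comp, mul_inv_cancel₀ this]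
          rw [this, diagonal_one, mul_one, hUU]
  set w : Fin n → ℂ := star U *ᵥ v with hw
  have hstarw : star w = star v ᵥ* U := by
    rw [hw, star_mulVec]
    rw [Matrix.star_eq_conjTranspose, conjTranspose_conjTranspose]
  have hS : star v ⬝ᵥ (A⁻¹ *ᵥ v) = ((∑ i, (L i)⁻¹ * ‖w i‖ ^ 2 : ℝ) : ℂ) := by
    rw [hinv, ← mulVec_mulVec, ← mulVec_mulVec, dotProduct_mulVec, ← hstarw]
    push_cast
    simp only [dotProduct, mulVec_diagonal]
    congr 1
    funext i
    have : star w i * w i = ((‖w i‖ : ℂ)) ^ 2 := by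
      have := RCLike.conj_mul (K := ℂ) (w i)
      push_cast at this ⊢
      simpa using this
    calc star w i * ((L i : ℂ)⁻¹ * w i) = (L i : ℂ)⁻¹ * (star w i * w i) := by ring
      _ = (L i : ℂ)⁻¹ * (‖w i‖ : ℂ) ^ 2 := by rw [this]
  have hN : (∑ i, ‖v i‖ ^ 2 : ℝ) = ∑ i, ‖w i‖ ^ 2 := by
    have h1 : star w ⬝ᵥ w = star v ⬝ᵥ v := by
      rw [hstarw, hw, dotProduct_mulVec, vecMul_vecMul, hUU, vecMul_one]
    have h2 : (star v ⬝ᵥ v) = ((∑ i, ‖v i‖^2 : ℝ) : ℂ) := by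
      push_cast
      simp only [dotProduct, Pi.star_apply]
      exact Finset.sum_congr rfl fun i _ => by
        have := RCLike.conj_mul (K := ℂ) (v i); push_cast at this; simpa using this
    have h3 : (star w ⬝ᵥ w) = ((∑ i, ‖w i‖^2 : ℝ) : ℂ) := by
      push_cast
      simp only [dotProduct, Pi.star_apply]
      exact Finset.sum_congr rfl fun i _ => by
        have := RCLike.conj_mul (K := ℂ) (w i); push_cast at this; simpa using this
    have := h3.symm.trans (h1.trans h2)
    exact_mod_cast this.symm
  have hdet : A.det = ((∏ i, L i : ℝ) : ℂ) := by
    rw [hA.1.det_eq_prod_eigenvalues]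
    push_cast
    rfl
  set P : ℝ := ∏ i, L i with hP
  set s : ℝ := ∑ i, (L i)⁻¹ * ‖w i‖ ^ 2 with hs
  rw [key, hS, hdet, hN]
  have hre : (((P:ℂ)) * (1 + (α:ℂ) * ((s:ℝ):ℂ))) = ((P * (1 + α * s) : ℝ) : ℂ) := by
    push_cast; ring
  rw [hre, Complex.ofReal_re, Complex.ofReal_re]
  -- real inequality
  have hsum : (∑ i, ‖w i‖ ^ 2) ≤ P * s := by
    rw [hs, Finset.mul_sum]
    refine Finset.sum_le_sum fun i _ => ?_
    have h1le : 1 ≤ P * (L i)⁻¹ := by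
      have hPe : P = L i * ∏ j ∈ Finset.univ.erase i, L j :=
        (Finset.mul_prod_erase _ _ (Finset.mem_univ i)).symm
      have h2 : 1 ≤ ∏ j ∈ Finset.univ.erase i, L j := by
        calc (1:ℝ) = ∏ _j ∈ Finset.univ.erase i, (1:ℝ) := by simp
          _ ≤ ∏ j ∈ Finset.univ.erase i, L j :=
            Finset.prod_le_prod (fun j _ => zero_le_one) (fun j _ => heig j)
      rw [hPe, mul_comm (L i), mul_assoc, mul_inv_cancel₀ (hLpos i).ne', mul_one]
      exact h2
    calc ‖w i‖ ^ 2 = 1 * ‖w i‖ ^ 2 := (one_mul _).symm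
      _ ≤ (P * (L i)⁻¹) * ‖w i‖ ^ 2 := by
          exact mul_le_mul_of_nonneg_right h1le (sq_nonneg _)
      _ = P * ((L i)⁻¹ * ‖w i‖ ^ 2) := by ring
  nlinarith [mul_le_mul_of_nonneg_left hsum hα]
end

section
/- Let X = U·V where U and V are independent random variables with U ~ Gamma(N_R, 1) and V ~ Gamma(N_T, 1) (N_T, N_R positive integers). Then the probability density function of X is f_X(x) = 2 x^{(N_T+N_R)/2 - 1} K_τ(2√x) / (Γ(N_T) Γ(N_R)) for x > 0, where τ = |N_T - N_R| and K_τ is the modified Bessel function of the second kind of order τ. -/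
open Real Set Filter MeasureTheory ProbabilityTheory ContinuousLinearMap
open scoped ENNReal

/-- The modified Bessel function of the second kind, via its standard
integral representation `K_ν(x) = ∫₀^∞ exp(-x cosh t) cosh(ν t) dt` (valid for `x > 0`). -/
noncomputable def besselK (ν x : ℝ) : ℝ :=
  ∫ t in Ioi (0 : ℝ), Real.exp (-x * Real.cosh t) * Real.cosh (ν * t)

lemma lintegral_image_1d {s : Set ℝ} {f f' : ℝ → ℝ} (hs : MeasurableSet s)
    (hf' : ∀ x ∈ s, HasDerivWithinAt f (f' x) s x) (hf : InjOn f s) (g : ℝ → ℝ≥0∞) :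
    ∫⁻ x in f '' s, g x = ∫⁻ x in s, ENNReal.ofReal |f' x| * g (f x) := by
  simpa only [ContinuousLinearMap.det_toSpanSingleton] using
    lintegral_image_eq_lintegral_abs_det_fderiv_mul volume hs
      (fun x hx => (hf' x hx).hasFDerivWithinAt) hf g

lemma image_exp {c : ℝ} (hc : 0 < c) : (fun t : ℝ => c * Real.exp t) '' univ = Ioi 0 := by
  ext y; simp only [image_univ, mem_range, mem_Ioi]
  constructor
  · rintro ⟨t, rfl⟩; positivity
  · intro hy
    exact ⟨Real.log (y / c), by rw [Real.exp_log (by positivity)]; field_simp⟩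

lemma besselK_integrableOn {ν c : ℝ} (hc : 0 < c) :
    IntegrableOn (fun t => Real.exp (-c * Real.cosh t) * Real.cosh (ν * t)) (Ioi (0:ℝ)) := by
  set M : ℝ := 2 * (|ν| + 1) ^ 2 / c with hM
  have hcont : Continuous fun t => Real.exp (-c * Real.cosh t) * Real.cosh (ν * t) := by
    continuity
  refine Integrable.mono' ((exp_neg_integrableOn_Ioi 0 one_pos).const_mul (Real.exp M)) hcont.aestronglyMeasurable ?_
  filter_upwards [ae_restrict_mem measurableSet_Ioi] with t (ht : 0 < t)
  rw [Real.norm_eq_abs, abs_of_nonneg (by positivity)]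
  have h1 : Real.cosh (ν * t) ≤ Real.exp (|ν| * t) := by
    rw [Real.cosh_eq]
    have a1 : Real.exp (ν * t) ≤ Real.exp (|ν| * t) :=
      Real.exp_le_exp.2 (mul_le_mul_of_nonneg_right (le_abs_self ν) ht.le)
    have a2 : Real.exp (-(ν * t)) ≤ Real.exp (|ν| * t) := by
      apply Real.exp_le_exp.2
      rw [neg_mul_eq_neg_mul]
      exact mul_le_mul_of_nonneg_right (neg_le_abs ν) ht.le
    linarith
  have h2 : Real.exp t / 2 ≤ Real.cosh t := by
    rw [Real.cosh_eq]; nlinarith [Real.exp_pos (-t)]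
  have h3 : Real.exp (-c * Real.cosh t) ≤ Real.exp (-(c/2) * Real.exp t) := by
    apply Real.exp_le_exp.2; nlinarith
  have h4 : t ^ 2 / 4 ≤ Real.exp t := by
    have := Real.add_one_le_exp (t/2)
    have h5 : Real.exp t = (Real.exp (t/2))^2 := by
      rw [← Real.exp_nat_mul]; ring_nf
    nlinarith
  calc Real.exp (-c * Real.cosh t) * Real.cosh (ν * t)
      ≤ Real.exp (-(c/2) * Real.exp t) * Real.exp (|ν| * t) := by
        apply mul_le_mul h3 h1 (by positivity) (Real.exp_pos _).le
    _ = Real.exp (|ν| * t - (c/2) * Real.exp t) := by rw [← Real.exp_add]; ring_nf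
    _ ≤ Real.exp M * Real.exp (-1 * t) := by
        rw [← Real.exp_add, Real.exp_le_exp]
        have hq : (c/8) * t^2 ≤ (c/2) * Real.exp t := by nlinarith
        have key : (|ν| + 1) * t - (c/8) * t^2 ≤ M := by
          set s := Real.sqrt (c/8) with hs
          have h7 : s ^ 2 = c/8 := Real.sq_sqrt (by positivity)
          have h8 : (0:ℝ) < s := Real.sqrt_pos.2 (by positivity)
          have h6 := sq_nonneg (s * t - (|ν|+1) / (2 * s))
          have e1 : s * t * ((|ν|+1) / (2 * s)) = t * (|ν|+1) / 2 := by
            field_simp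
          have e2 : ((|ν|+1) / (2 * s))^2 = M := by
            rw [hM, div_pow, mul_pow, h7]; field_simp; ring
          nlinarith [h6, e1, e2, h7]
        nlinarith [abs_nonneg ν]

lemma real_calc (a b ca cb : ℝ) {x : ℝ} (hx : 0 < x) (t : ℝ) :
    |Real.sqrt x * Real.exp t| *
      (ca * (Real.sqrt x * Real.exp t) ^ (a-1) * Real.exp (-(Real.sqrt x * Real.exp t)) *
        (Real.sqrt x * Real.exp t)⁻¹ *
        (cb * ((Real.sqrt x * Real.exp t)⁻¹ * x) ^ (b-1) *
          Real.exp (-((Real.sqrt x * Real.exp t)⁻¹ * x))))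
    = ca * cb * x ^ ((b + a)/2 - 1) *
        (Real.exp ((a-b)*t) * Real.exp (-(2 * Real.sqrt x) * Real.cosh t)) := by
  set c := Real.sqrt x with hcdef
  have hc : 0 < c := Real.sqrt_pos.2 hx
  have hcc : c * c = x := Real.mul_self_sqrt hx.le
  have he : (0:ℝ) < Real.exp t := Real.exp_pos t
  have hne : c * Real.exp t ≠ 0 := by positivity
  have h1 : (c * Real.exp t)⁻¹ * x = c * Real.exp (-t) := by
    rw [Real.exp_neg]; field_simp; rw [← hcc]; ring
  have h2 : (c * Real.exp t) ^ (a-1) = c ^ (a-1) * Real.exp ((a-1)*t) := by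
    rw [Real.mul_rpow hc.le he.le, ← Real.exp_mul, mul_comm t]
  have h3 : (c * Real.exp (-t)) ^ (b-1) = c ^ (b-1) * Real.exp ((b-1)*(-t)) := by
    rw [Real.mul_rpow hc.le (Real.exp_pos _).le, ← Real.exp_mul, mul_comm (-t)]
  have h5 : x ^ ((b + a)/2 - 1) = c ^ (a-1) * c ^ (b-1) := by
    rw [← Real.rpow_add hc, hcdef, Real.sqrt_eq_rpow, ← Real.rpow_mul hx.le]
    congr 1; ring
  have h6 : Real.exp (-(2*c) * Real.cosh t) =
      Real.exp (-(c * Real.exp t)) * Real.exp (-(c * Real.exp (-t))) := by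
    rw [← Real.exp_add, Real.cosh_eq]; congr 1; ring
  have h7 : Real.exp ((a-b)*t) = Real.exp ((a-1)*t) * Real.exp ((b-1)*(-t)) := by
    rw [← Real.exp_add]; congr 1; ring
  rw [h1, h2, h3, h5, h6, h7, abs_of_pos (by positivity)]
  field_simp

lemma key_lintegral (a b : ℝ) (hga : 0 < Real.Gamma a) (hgb : 0 < Real.Gamma b)
    {x : ℝ} (hx : 0 < x) :
    ∫⁻ u in Ioi (0:ℝ), gammaPDF a 1 u * ENNReal.ofReal u⁻¹ * gammaPDF b 1 (u⁻¹ * x)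
      = ENNReal.ofReal (2 * x ^ ((b + a) / 2 - 1) * besselK |b - a| (2 * Real.sqrt x) /
          (Real.Gamma b * Real.Gamma a)) := by
  have hc : 0 < Real.sqrt x := Real.sqrt_pos.2 hx
  set ca := (Real.Gamma a)⁻¹ with hcadef
  set cb := (Real.Gamma b)⁻¹ with hcbdef
  set φ : ℝ → ℝ := fun u =>
    ca * u ^ (a-1) * Real.exp (-u) * u⁻¹ * (cb * (u⁻¹ * x) ^ (b-1) * Real.exp (-(u⁻¹ * x)))
    with hφdef
  -- Step 1: rewrite integrand as ofReal ∘ φ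
  have step1 : ∫⁻ u in Ioi (0:ℝ), gammaPDF a 1 u * ENNReal.ofReal u⁻¹ * gammaPDF b 1 (u⁻¹ * x)
      = ∫⁻ u in Ioi (0:ℝ), ENNReal.ofReal (φ u) := by
    apply setLIntegral_congr_fun measurableSet_Ioi
    intro u (hu : 0 < u)
    beta_reduce
    rw [gammaPDF_of_nonneg hu.le, gammaPDF_of_nonneg (by positivity : (0:ℝ) ≤ u⁻¹ * x)]
    rw [← ENNReal.ofReal_mul (by positivity)]
    rw [← ENNReal.ofReal_mul (by positivity : (0:ℝ) ≤ 1 ^ a / Real.Gamma a * u ^ (a - 1) * Real.exp (-(1 * u)) * u⁻¹)]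
    congr 1
    simp only [hφdef, Real.one_rpow, one_mul, one_div]
    rfl
  rw [step1]
  -- Step 2: change of variables u = √x * exp t
  have hinj : InjOn (fun t : ℝ => Real.sqrt x * Real.exp t) univ := by
    intro s _ t _ h
    simp only at h
    exact Real.exp_injective (mul_left_cancel₀ hc.ne' h)
  have hderiv : ∀ t ∈ (univ : Set ℝ), HasDerivWithinAt (fun t : ℝ => Real.sqrt x * Real.exp t)
      (Real.sqrt x * Real.exp t) univ t :=
    fun t _ => ((Real.hasDerivAt_exp t).const_mul (Real.sqrt x)).hasDerivWithinAt
  have step2 : ∫⁻ u in Ioi (0:ℝ), ENNReal.ofReal (φ u)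
      = ∫⁻ t, ENNReal.ofReal (ca * cb * x ^ ((b + a)/2 - 1) *
          (Real.exp ((a-b)*t) * Real.exp (-(2 * Real.sqrt x) * Real.cosh t))) := by
    rw [← image_exp hc, lintegral_image_1d MeasurableSet.univ hderiv hinj
      (fun u => ENNReal.ofReal (φ u)), setLIntegral_univ]
    apply lintegral_congr
    intro t
    rw [← ENNReal.ofReal_mul (abs_nonneg _), ← real_calc a b ca cb hx t]
  rw [step2]
  set c2 := 2 * Real.sqrt x with hc2def
  have hc2 : 0 < c2 := by positivity
  have hca : 0 < ca := by rw [hcadef]; positivity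
  have hcb : 0 < cb := by rw [hcbdef]; positivity
  set D := ca * cb * x ^ ((b + a)/2 - 1) with hDdef
  have hD : 0 < D := by positivity
  set ψ : ℝ → ℝ≥0∞ := fun t =>
    ENNReal.ofReal (D * (Real.exp ((a-b)*t) * Real.exp (-c2 * Real.cosh t))) with hψdef
  have hψcont : Continuous fun t => D * (Real.exp ((a-b)*t) * Real.exp (-c2 * Real.cosh t)) := by
    fun_prop
  have hψmeas : Measurable ψ := hψcont.measurable.ennreal_ofReal
  have split : ∫⁻ t, ψ t = (∫⁻ t in Iio (0:ℝ), ψ t) + ∫⁻ t in Ioi (0:ℝ), ψ t := by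
    rw [← lintegral_add_compl ψ measurableSet_Iio, compl_Iio,
      ← Measure.restrict_congr_set Ioi_ae_eq_Ici]
  have hrefl : (∫⁻ t in Iio (0:ℝ), ψ t) = ∫⁻ t in Ioi (0:ℝ), ψ (-t) := by
    have him : (Neg.neg '' Ioi (0:ℝ)) = Iio 0 := by simp [Set.image_neg_eq_neg]
    rw [← him, lintegral_image_1d measurableSet_Ioi
      (fun t _ => (hasDerivAt_neg t).hasDerivWithinAt) neg_injective.injOn ψ]
    simp
  have habs : ∀ t : ℝ, Real.cosh (|b-a| * t) = Real.cosh ((a-b)*t) := by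
    intro t
    rcases abs_cases (b-a) with ⟨h,_⟩|⟨h,_⟩ <;> rw [h]
    · rw [show (b-a)*t = -((a-b)*t) by ring, Real.cosh_neg]
    · rw [show -(b-a)*t = (a-b)*t by ring]
  have sum_eq : ∀ t : ℝ, ψ (-t) + ψ t
      = ENNReal.ofReal ((2*D) * (Real.exp (-c2 * Real.cosh t) * Real.cosh (|b-a| * t))) := by
    intro t
    rw [hψdef]
    simp only [Real.cosh_neg]
    rw [← ENNReal.ofReal_add (by positivity) (by positivity)]
    congr 1
    rw [habs t, Real.cosh_eq ((a-b)*t), show (a-b)*(-t) = -((a-b)*t) by ring]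
    ring
  calc ∫⁻ t, ψ t = (∫⁻ t in Ioi (0:ℝ), ψ (-t)) + ∫⁻ t in Ioi (0:ℝ), ψ t := by
        rw [split, hrefl]
    _ = ∫⁻ t in Ioi (0:ℝ), (ψ (-t) + ψ t) := by
        exact (lintegral_add_left (hψmeas.comp measurable_neg) ψ).symm
    _ = ∫⁻ t in Ioi (0:ℝ), ENNReal.ofReal (2*D) *
          ENNReal.ofReal (Real.exp (-c2 * Real.cosh t) * Real.cosh (|b-a| * t)) := by
        apply setLIntegral_congr_fun measurableSet_Ioi
        intro t _
        beta_reduce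
        rw [sum_eq t, ENNReal.ofReal_mul (by positivity)]
    _ = ENNReal.ofReal (2*D) *
          ∫⁻ t in Ioi (0:ℝ), ENNReal.ofReal (Real.exp (-c2 * Real.cosh t) * Real.cosh (|b-a| * t)) := by
        rw [lintegral_const_mul]
        apply Measurable.ennreal_ofReal
        fun_prop
    _ = ENNReal.ofReal (2*D) * ENNReal.ofReal (besselK |b-a| c2) := by
        congr 1
        rw [← ofReal_integral_eq_lintegral_ofReal (besselK_integrableOn hc2)
          (ae_of_all _ fun t => mul_nonneg (Real.exp_pos _).le (Real.cosh_pos _).le)]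
        rfl
    _ = ENNReal.ofReal (2 * x ^ ((b + a) / 2 - 1) * besselK |b - a| (2 * Real.sqrt x) /
          (Real.Gamma b * Real.Gamma a)) := by
        rw [← ENNReal.ofReal_mul (by positivity)]
        congr 1
        rw [hDdef, hcadef, hcbdef, ← hc2def]
        field_simp


theorem pdf_product_of_gammas
    {Ω : Type*} [MeasureSpace Ω] [IsProbabilityMeasure (ℙ : Measure Ω)]
    (N_T N_R : ℕ) (hNT : 1 ≤ N_T) (hNR : 1 ≤ N_R)
    (U V : Ω → ℝ) (hU : Measurable U) (hV : Measurable V)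
    (hUlaw : Measure.map U ℙ = gammaMeasure N_R 1)
    (hVlaw : Measure.map V ℙ = gammaMeasure N_T 1)
    (hindep : IndepFun U V ℙ) :
    Measure.map (fun ω => U ω * V ω) ℙ
      = volume.withDensity (fun x : ℝ => ENNReal.ofReal
          (if 0 < x then
            2 * x ^ (((N_T : ℝ) + N_R) / 2 - 1) *
              besselK (|(N_T : ℝ) - N_R|) (2 * Real.sqrt x) /
              (Real.Gamma N_T * Real.Gamma N_R)
          else 0)) := by
  have hNR' : (0:ℝ) < (N_R:ℝ) := by exact_mod_cast Nat.lt_of_lt_of_le Nat.zero_lt_one hNR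
  have hNT' : (0:ℝ) < (N_T:ℝ) := by exact_mod_cast Nat.lt_of_lt_of_le Nat.zero_lt_one hNT
  have hGa : 0 < Real.Gamma (N_R:ℝ) := Real.Gamma_pos_of_pos hNR'
  have hGb : 0 < Real.Gamma (N_T:ℝ) := Real.Gamma_pos_of_pos hNT'
  have hmul : Measurable fun p : ℝ × ℝ => p.1 * p.2 := measurable_fst.mul measurable_snd
  have hpair : Measurable fun ω => (U ω, V ω) := hU.prodMk hV
  have hUV : Measure.map (fun ω => (U ω, V ω)) ℙ
      = (gammaMeasure (N_R:ℝ) 1).prod (gammaMeasure (N_T:ℝ) 1) := by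
    rw [← hUlaw, ← hVlaw]
    exact (indepFun_iff_map_prod_eq_prod_map_map hU.aemeasurable hV.aemeasurable).1 hindep
  have hcomp : (fun ω => U ω * V ω) = (fun p : ℝ × ℝ => p.1 * p.2) ∘ fun ω => (U ω, V ω) := rfl
  rw [hcomp, ← Measure.map_map hmul hpair, hUV]
  set ga := gammaPDF (N_R:ℝ) 1 with hgadef
  set gb := gammaPDF (N_T:ℝ) 1 with hgbdef
  have hga : Measurable ga := (measurable_gammaPDFReal _ _).ennreal_ofReal
  have hgb : Measurable gb := (measurable_gammaPDFReal _ _).ennreal_ofReal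
  set target : ℝ → ℝ≥0∞ := fun x => ENNReal.ofReal
      (if 0 < x then
        2 * x ^ (((N_T : ℝ) + N_R) / 2 - 1) *
          besselK (|(N_T : ℝ) - N_R|) (2 * Real.sqrt x) /
          (Real.Gamma N_T * Real.Gamma N_R)
      else 0) with htar
  have hae : ∀ᵐ u : ℝ, u ≠ 0 := by
    refine ae_iff.mpr ?_
    simpa using measure_singleton (0:ℝ)
  haveI : IsProbabilityMeasure (gammaMeasure (N_R:ℝ) 1) := isProbabilityMeasure_gammaMeasure hNR' one_pos
  haveI : IsProbabilityMeasure (gammaMeasure (N_T:ℝ) 1) := isProbabilityMeasure_gammaMeasure hNT' one_pos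
  ext s hs
  set ind : ℝ → ℝ≥0∞ := s.indicator 1 with hinddef
  have hind : Measurable ind := measurable_one.indicator hs
  set F : ℝ → ℝ≥0∞ := fun u => ∫⁻ v, ind (u * v) * gb v with hFdef
  have hFmeas : Measurable F := by
    apply Measurable.lintegral_prod_right'
      (f := fun p : ℝ × ℝ => ind (p.1 * p.2) * gb p.2)
    exact (hind.comp hmul).mul (hgb.comp measurable_snd)
  have A1 : ((gammaMeasure (N_R:ℝ) 1).prod (gammaMeasure (N_T:ℝ) 1))
        ((fun p : ℝ × ℝ => p.1 * p.2) ⁻¹' s)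
      = ∫⁻ u, ga u * F u := by
    rw [Measure.prod_apply (hmul hs)]
    have inner : ∀ u : ℝ, (gammaMeasure (N_T:ℝ) 1)
        (Prod.mk u ⁻¹' ((fun p : ℝ × ℝ => p.1 * p.2) ⁻¹' s)) = F u := by
      intro u
      have hpre : (Prod.mk u ⁻¹' ((fun p : ℝ × ℝ => p.1 * p.2) ⁻¹' s))
          = (fun v => u * v) ⁻¹' s := rfl
      have hA : MeasurableSet ((fun v => u * v) ⁻¹' s) := (measurable_const_mul u) hs
      rw [hpre, gammaMeasure, withDensity_apply _ hA, ← lintegral_indicator hA]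
      apply lintegral_congr
      intro v
      by_cases h : u * v ∈ s
      · simp [hinddef, hgbdef, Set.indicator_of_mem, h, Set.mem_preimage,
          Set.indicator_of_mem (show v ∈ (fun v => u * v) ⁻¹' s from h)]
      · simp [hinddef, hgbdef, Set.indicator_of_notMem, h,
          Set.indicator_of_notMem (show v ∉ (fun v => u * v) ⁻¹' s from h)]
    simp_rw [inner]
    rw [gammaMeasure, lintegral_withDensity_eq_lintegral_mul _ hga hFmeas]
    rfl
  rw [Measure.map_apply hmul hs, A1]
  have A2 : ∫⁻ u, ga u * F u = ∫⁻ u in Ioi (0:ℝ), ga u * F u := by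
    rw [← lintegral_indicator measurableSet_Ioi]
    apply lintegral_congr_ae
    filter_upwards [hae] with u hu
    rcases lt_or_gt_of_ne hu with h | h
    · rw [Set.indicator_of_notMem (by simpa using h.le), hgadef, gammaPDF_of_neg h, zero_mul]
    · rw [Set.indicator_of_mem (mem_Ioi.2 h)]
  rw [A2]
  have A3 : ∫⁻ u in Ioi (0:ℝ), ga u * F u
      = ∫⁻ u in Ioi (0:ℝ), ∫⁻ x, ga u * ENNReal.ofReal u⁻¹ * (ind x * gb (u⁻¹ * x)) := by
    apply setLIntegral_congr_fun measurableSet_Ioi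
    intro u hu
    have hu0 : (0:ℝ) < u := hu
    have h1 : Measurable fun v => ind (u * v) * gb v :=
      (hind.comp (measurable_const_mul u)).mul hgb
    have hmx : Measurable fun x => ind x * gb (u⁻¹ * x) :=
      hind.mul (hgb.comp (measurable_const_mul u⁻¹))
    have hmap : ∫⁻ x, ind (u * (u⁻¹ * x)) * gb (u⁻¹ * x) = ENNReal.ofReal u * F u := by
      calc ∫⁻ x, ind (u * (u⁻¹ * x)) * gb (u⁻¹ * x)
          = ∫⁻ v, ind (u * v) * gb v ∂(Measure.map (fun x => u⁻¹ * x) volume) :=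
            (lintegral_map h1 (measurable_const_mul u⁻¹)).symm
        _ = ENNReal.ofReal u * F u := by
            rw [Real.map_volume_mul_left (inv_ne_zero hu0.ne'), lintegral_smul_measure,
              inv_inv, abs_of_pos hu0, hFdef, smul_eq_mul]
    have hkey : ∫⁻ x, ind x * gb (u⁻¹ * x) = ENNReal.ofReal u * F u := by
      rw [← hmap]
      apply lintegral_congr
      intro x
      rw [mul_inv_cancel_left₀ hu0.ne']
    symm
    calc ∫⁻ x, ga u * ENNReal.ofReal u⁻¹ * (ind x * gb (u⁻¹ * x))
        = ga u * ENNReal.ofReal u⁻¹ * ∫⁻ x, ind x * gb (u⁻¹ * x) :=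
          lintegral_const_mul _ hmx
      _ = ga u * ENNReal.ofReal u⁻¹ * (ENNReal.ofReal u * F u) := by rw [hkey]
      _ = ga u * F u := by
          rw [mul_assoc (ga u), ← mul_assoc (ENNReal.ofReal u⁻¹),
            ← ENNReal.ofReal_mul (by positivity), inv_mul_cancel₀ hu0.ne',
            ENNReal.ofReal_one, one_mul]
  rw [A3]
  have A4 : (∫⁻ u in Ioi (0:ℝ), ∫⁻ x, ga u * ENNReal.ofReal u⁻¹ * (ind x * gb (u⁻¹ * x)))
      = ∫⁻ x, ∫⁻ u in Ioi (0:ℝ), ga u * ENNReal.ofReal u⁻¹ * (ind x * gb (u⁻¹ * x)) := by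
    apply lintegral_lintegral_swap
    apply Measurable.aemeasurable
    exact ((hga.comp measurable_fst).mul (measurable_fst.inv.ennreal_ofReal)).mul
      ((hind.comp measurable_snd).mul (hgb.comp (measurable_fst.inv.mul measurable_snd)))
  rw [A4]
  have A5 : ∫⁻ x, (∫⁻ u in Ioi (0:ℝ), ga u * ENNReal.ofReal u⁻¹ * (ind x * gb (u⁻¹ * x)))
      = ∫⁻ x, ind x * target x := by
    apply lintegral_congr_ae
    filter_upwards [hae] with x hx
    have hre : ∀ u : ℝ, ga u * ENNReal.ofReal u⁻¹ * (ind x * gb (u⁻¹ * x))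
        = ind x * (ga u * ENNReal.ofReal u⁻¹ * gb (u⁻¹ * x)) := fun u => by ring
    simp_rw [hre]
    rw [lintegral_const_mul (ind x) (f := fun u => ga u * ENNReal.ofReal u⁻¹ * gb (u⁻¹ * x))
      ((hga.mul measurable_inv.ennreal_ofReal).mul (hgb.comp (measurable_inv.mul_const x)))]
    congr 1
    rcases lt_or_gt_of_ne hx with h | h
    · simp only [htar]
      rw [if_neg (not_lt.2 h.le), ENNReal.ofReal_zero]
      calc ∫⁻ u in Ioi (0:ℝ), ga u * ENNReal.ofReal u⁻¹ * gb (u⁻¹ * x)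
          = ∫⁻ _ in Ioi (0:ℝ), 0 := by
            apply setLIntegral_congr_fun measurableSet_Ioi
            intro u hu
            have hu0 : (0:ℝ) < u := hu
            have : u⁻¹ * x < 0 := mul_neg_of_pos_of_neg (by positivity) h
            beta_reduce
            rw [hgbdef, gammaPDF_of_neg this, mul_zero]
        _ = 0 := lintegral_zero
    · simp only [htar]
      rw [if_pos h, hgadef, hgbdef]
      exact key_lintegral (N_R:ℝ) (N_T:ℝ) hGa hGb h
  rw [A5]
  have A6 : ∫⁻ x, ind x * target x = ∫⁻ x, s.indicator target x := by
    apply lintegral_congr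
    intro x
    by_cases h : x ∈ s
    · simp [hinddef, Set.indicator_of_mem h]
    · simp [hinddef, Set.indicator_of_notMem h]
  rw [A6, lintegral_indicator hs, withDensity_apply _ hs]
end

section
/- Let U ~ Gamma(N_R, 1) and V ~ Gamma(N_T, 1) be independent with positive integers N_T > N_R, and let X = U·V. Then as x → 0⁺, the CDF F_X(x) satisfies F_X(x) ~ Γ(N_T - N_R) x^{N_R} / (Γ(N_T) Γ(N_R) N_R), i.e., lim_{x→0⁺} F_X(x) / (Γ(N_T-N_R) x^{N_R}/(Γ(N_T)Γ(N_R) N_R)) = 1. -/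
open Real Set Filter MeasureTheory ProbabilityTheory

private lemma lint_rpow_aux {a t c : ℝ} (ha : 0 < a) (ht : 0 ≤ t) (hc : 0 ≤ c) :
    ∫⁻ u in Icc (0:ℝ) t, ENNReal.ofReal (c * u ^ (a - 1)) = ENNReal.ofReal (c * (t ^ a / a)) := by
  rw [← Measure.restrict_congr_set Ioc_ae_eq_Icc]
  have hint : IntegrableOn (fun u : ℝ => c * u ^ (a - 1)) (Ioc 0 t) := by
    have := (intervalIntegral.intervalIntegrable_rpow' (a := 0) (b := t) (r := a - 1)
      (by linarith)).const_mul c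
    exact this.1
  rw [← ofReal_integral_eq_lintegral_ofReal hint]
  · congr 1
    rw [integral_const_mul]
    congr 1
    rw [← intervalIntegral.integral_of_le ht, integral_rpow (Or.inl (by linarith)),
      sub_add_cancel, Real.zero_rpow ha.ne', sub_zero]
  · refine (ae_restrict_iff' measurableSet_Ioc).mpr (ae_of_all _ fun u hu => ?_)
    have : (0:ℝ) < u := hu.1
    positivity

/-- Upper and lower bounds for the Gamma CDF near 0. -/
private lemma gamma_cdf_bounds {a t : ℝ} (ha : 0 < a) (ht : 0 ≤ t) :
    ENNReal.ofReal (Real.exp (-t) / Real.Gamma a * (t ^ a / a)) ≤ gammaMeasure a 1 (Iic t) ∧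
      gammaMeasure a 1 (Iic t) ≤ ENNReal.ofReal (1 / Real.Gamma a * (t ^ a / a)) := by
  have hG : 0 < Real.Gamma a := Real.Gamma_pos_of_pos ha
  rw [gammaMeasure, withDensity_apply _ measurableSet_Iic,
    lintegral_Iic_eq_lintegral_Iio_add_Icc _ ht, lintegral_gammaPDF_of_nonpos le_rfl, zero_add]
  have hpdf : ∀ u ∈ Icc (0:ℝ) t, gammaPDF a 1 u
      = ENNReal.ofReal (1 / Real.Gamma a * u ^ (a - 1) * Real.exp (-u)) := by
    intro u hu
    rw [gammaPDF_of_nonneg hu.1, Real.one_rpow, one_mul]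
  constructor
  · rw [← lint_rpow_aux ha ht (le_of_lt (by positivity) : (0:ℝ) ≤ Real.exp (-t) / Real.Gamma a)]
    refine setLIntegral_mono (measurable_gammaPDFReal a 1).ennreal_ofReal fun u hu => ?_
    rw [hpdf u hu]
    refine ENNReal.ofReal_le_ofReal ?_
    have h1 : Real.exp (-t) ≤ Real.exp (-u) := Real.exp_le_exp.mpr (by linarith [hu.2])
    have h2 : (0:ℝ) ≤ u ^ (a - 1) := Real.rpow_nonneg hu.1 _
    calc Real.exp (-t) / Real.Gamma a * u ^ (a - 1)
        = Real.exp (-t) * u ^ (a - 1) / Real.Gamma a := by ring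
      _ ≤ Real.exp (-u) * u ^ (a - 1) / Real.Gamma a := by
          gcongr
      _ = 1 / Real.Gamma a * u ^ (a - 1) * Real.exp (-u) := by ring
  · rw [← lint_rpow_aux ha ht (le_of_lt (by positivity) : (0:ℝ) ≤ 1 / Real.Gamma a)]
    refine setLIntegral_mono (by fun_prop) fun u hu => ?_
    rw [hpdf u hu]
    refine ENNReal.ofReal_le_ofReal ?_
    have h2 : (0:ℝ) ≤ 1 / Real.Gamma a * u ^ (a - 1) := by
      have := Real.rpow_nonneg hu.1 (a - 1); positivity
    have h1 : Real.exp (-u) ≤ 1 := Real.exp_le_one_iff.mpr (by linarith [hu.1])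
    exact mul_le_of_le_one_right h2 h1

/-- The negative moment of the Gamma distribution. -/
private lemma gamma_neg_moment {a b : ℝ} (hb : 0 < b) (hab : 0 < b - a) :
    ∫⁻ v, ENNReal.ofReal (if 0 < v then v ^ (-a) else 0) ∂(gammaMeasure b 1)
      = ENNReal.ofReal (Real.Gamma (b - a) / Real.Gamma b) := by
  have hGb : 0 < Real.Gamma b := Real.Gamma_pos_of_pos hb
  have hmg : Measurable fun v : ℝ => ENNReal.ofReal (if 0 < v then v ^ (-a) else 0) := by
    refine Measurable.ennreal_ofReal ?_
    exact Measurable.ite measurableSet_Ioi (by fun_prop) measurable_const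
  have hpdfm : Measurable (gammaPDF b 1) := (measurable_gammaPDFReal b 1).ennreal_ofReal
  rw [gammaMeasure, lintegral_withDensity_eq_lintegral_mul _ hpdfm hmg]
  rw [← lintegral_add_compl _ (measurableSet_Ioi (a := (0:ℝ)))]
  have h2 : ∫⁻ v in (Ioi (0:ℝ))ᶜ,
      (gammaPDF b 1 * fun v => ENNReal.ofReal (if 0 < v then v ^ (-a) else 0)) v = 0 := by
    rw [setLIntegral_congr_fun (g := fun _ => 0) (measurableSet_Ioi (a := (0:ℝ))).compl
      (fun v hv => by
        simp only [Pi.mul_apply, mem_compl_iff, mem_Ioi, not_lt] at hv ⊢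
        rw [if_neg (not_lt.mpr hv), ENNReal.ofReal_zero, mul_zero])]
    simp
  rw [h2, add_zero]
  have h1 : ∫⁻ v in Ioi (0:ℝ),
      (gammaPDF b 1 * fun v => ENNReal.ofReal (if 0 < v then v ^ (-a) else 0)) v
      = ∫⁻ v in Ioi (0:ℝ),
        ENNReal.ofReal (1 / Real.Gamma b * (Real.exp (-v) * v ^ (b - a - 1))) := by
    refine setLIntegral_congr_fun measurableSet_Ioi (fun v hv => ?_)
    have hv : (0:ℝ) < v := hv
    simp only [Pi.mul_apply]
    rw [if_pos hv, gammaPDF_of_nonneg (le_of_lt hv), Real.one_rpow, one_mul,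
      ← ENNReal.ofReal_mul (by positivity)]
    congr 1
    have hrw : v ^ (b - 1) * v ^ (-a) = v ^ (b - a - 1) := by
      rw [← Real.rpow_add hv]; ring_nf
    calc 1 / Real.Gamma b * v ^ (b - 1) * Real.exp (-v) * v ^ (-a)
        = 1 / Real.Gamma b * (Real.exp (-v) * (v ^ (b - 1) * v ^ (-a))) := by ring_nf
      _ = 1 / Real.Gamma b * (Real.exp (-v) * v ^ (b - a - 1)) := by rw [hrw]
  rw [h1]
  have hint : IntegrableOn (fun v : ℝ => 1 / Real.Gamma b * (Real.exp (-v) * v ^ (b - a - 1)))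
      (Ioi 0) := by
    have := (Real.GammaIntegral_convergent hab).const_mul (1 / Real.Gamma b)
    simpa [mul_assoc, IntegrableOn] using this
  rw [← ofReal_integral_eq_lintegral_ofReal hint
    ((ae_restrict_iff' measurableSet_Ioi).mpr (ae_of_all _ fun v hv => by
      have : (0:ℝ) < v := hv
      positivity))]
  congr 1
  rw [integral_const_mul, ← Real.Gamma_eq_integral hab]
  ring

theorem cdf_product_gammas_asymp_unbalanced
    {Ω : Type*} [MeasureSpace Ω] [IsProbabilityMeasure (ℙ : Measure Ω)]
    (N_T N_R : ℕ) (hNR : 1 ≤ N_R) (h : N_R < N_T)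
    (U V : Ω → ℝ) (hU : Measurable U) (hV : Measurable V)
    (hUlaw : Measure.map U ℙ = gammaMeasure N_R 1)
    (hVlaw : Measure.map V ℙ = gammaMeasure N_T 1)
    (hindep : IndepFun U V ℙ) :
    Tendsto (fun x : ℝ =>
        (ℙ {ω | U ω * V ω ≤ x}).toReal /
          (Real.Gamma ((N_T : ℝ) - N_R) * x ^ N_R /
            (Real.Gamma N_T * Real.Gamma N_R * N_R)))
      (nhdsWithin 0 (Ioi 0)) (nhds 1) := by
  have ha : (0:ℝ) < (N_R : ℝ) := by exact_mod_cast Nat.lt_of_lt_of_le Nat.zero_lt_one hNR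
  have hb : (0:ℝ) < (N_T : ℝ) := by exact_mod_cast Nat.lt_of_le_of_lt (Nat.zero_le _) h
  have hab : (0:ℝ) < (N_T : ℝ) - (N_R : ℝ) := by
    have : (N_R : ℝ) < (N_T : ℝ) := by exact_mod_cast h
    linarith
  set a : ℝ := (N_R : ℝ) with ha_def
  set b : ℝ := (N_T : ℝ) with hb_def
  have hGa : 0 < Real.Gamma a := Real.Gamma_pos_of_pos ha
  have hGb : 0 < Real.Gamma b := Real.Gamma_pos_of_pos hb
  have hGab : 0 < Real.Gamma (b - a) := Real.Gamma_pos_of_pos hab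
  set μU : Measure ℝ := gammaMeasure a 1 with hμU
  set μV : Measure ℝ := gammaMeasure b 1 with hμV
  have instU : IsProbabilityMeasure μU := isProbabilityMeasure_gammaMeasure ha one_pos
  have instV : IsProbabilityMeasure μV := isProbabilityMeasure_gammaMeasure hb one_pos
  -- the distribution of the product
  have hprod : Measure.map (fun ω => (U ω, V ω)) ℙ = μU.prod μV := by
    rw [(indepFun_iff_map_prod_eq_prod_map_map hU.aemeasurable hV.aemeasurable).mp hindep,
      hUlaw, hVlaw]
  have hFx : ∀ x : ℝ, ℙ {ω | U ω * V ω ≤ x} = ∫⁻ v, μU {u | u * v ≤ x} ∂μV := by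
    intro x
    have hs : MeasurableSet {p : ℝ × ℝ | p.1 * p.2 ≤ x} :=
      measurableSet_le (measurable_fst.mul measurable_snd) measurable_const
    have hset : {ω | U ω * V ω ≤ x} = (fun ω => (U ω, V ω)) ⁻¹' {p : ℝ × ℝ | p.1 * p.2 ≤ x} := rfl
    rw [hset, ← Measure.map_apply (hU.prodMk hV) hs, hprod, Measure.prod_apply_symm hs]
    rfl
  -- a.e. positivity under μV
  have haeV : ∀ᵐ v ∂μV, 0 < v := by
    rw [ae_iff]
    have hset : {v : ℝ | ¬ 0 < v} = Iic 0 := by ext v; simp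
    rw [hset, hμV, gammaMeasure, withDensity_apply _ measurableSet_Iic,
      lintegral_Iic_eq_lintegral_Iio_add_Icc _ le_rfl, lintegral_gammaPDF_of_nonpos le_rfl,
      zero_add, Icc_self, Measure.restrict_eq_zero.mpr (by simp), lintegral_zero_measure]
  -- auxiliary functions
  set K : ℝ := Real.Gamma (b - a) / Real.Gamma b with hK_def
  have hKpos : 0 < K := div_pos hGab hGb
  set hfun : ℝ → ℝ := fun v => if 0 < v then v ^ (-a) else 0 with hhfun
  set ffun : ℝ → ℝ → ℝ := fun x v => if 0 < v then Real.exp (-(x / v)) * v ^ (-a) else 0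
    with hffun
  have hfun_nonneg : ∀ v, 0 ≤ hfun v := fun v => by
    rw [hhfun]; dsimp only; split_ifs with hv
    · exact Real.rpow_nonneg (le_of_lt hv) _
    · exact le_rfl
  have hfun_meas : Measurable hfun :=
    Measurable.ite measurableSet_Ioi (by fun_prop) measurable_const
  have ffun_meas : ∀ x, Measurable (ffun x) := fun x =>
    Measurable.ite measurableSet_Ioi (by fun_prop) measurable_const
  have ffun_nonneg : ∀ x v, 0 ≤ ffun x v := fun x v => by
    rw [hffun]; dsimp only; split_ifs with hv
    · have := Real.rpow_nonneg (le_of_lt hv) (-a); positivity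
    · exact le_rfl
  -- the moment computation
  have hmoment : ∫⁻ v, ENNReal.ofReal (hfun v) ∂μV = ENNReal.ofReal K :=
    gamma_neg_moment hb hab
  have hfun_int : Integrable hfun μV := by
    refine ⟨hfun_meas.aestronglyMeasurable, ?_⟩
    rw [hasFiniteIntegral_iff_ofReal (ae_of_all _ hfun_nonneg), hmoment]
    exact ENNReal.ofReal_lt_top
  have hfun_integral : ∫ v, hfun v ∂μV = K := by
    rw [integral_eq_lintegral_of_nonneg_ae (ae_of_all _ hfun_nonneg)
      hfun_meas.aestronglyMeasurable, hmoment, ENNReal.toReal_ofReal (le_of_lt hKpos)]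
  -- dominated convergence
  have hDCT : Tendsto (fun x => ∫ v, ffun x v ∂μV) (nhdsWithin 0 (Ioi 0)) (nhds K) := by
    rw [← hfun_integral]
    refine tendsto_integral_filter_of_dominated_convergence hfun
      (Eventually.of_forall fun x => (ffun_meas x).aestronglyMeasurable) ?_ hfun_int ?_
    · filter_upwards [self_mem_nhdsWithin] with x hx
      refine ae_of_all _ fun v => ?_
      rw [Real.norm_of_nonneg (ffun_nonneg x v)]
      rw [hffun, hhfun]; dsimp only
      split_ifs with hv
      · refine mul_le_of_le_one_left (Real.rpow_nonneg (le_of_lt hv) _) ?_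
        refine Real.exp_le_one_iff.mpr ?_
        have hx0 : (0:ℝ) < x := hx
        have : 0 ≤ x / v := le_of_lt (div_pos hx0 hv)
        linarith
      · exact le_rfl
    · refine ae_of_all _ fun v => ?_
      rw [hffun, hhfun]; dsimp only
      split_ifs with hv
      · have hcont : Continuous fun x : ℝ => Real.exp (-(x / v)) * v ^ (-a) := by
          fun_prop
        have := (hcont.tendsto 0).mono_left (nhdsWithin_le_nhds (s := Ioi 0))
        simpa using this
      · exact tendsto_const_nhds
  -- key pointwise bounds for x > 0
  have key : ∀ x : ℝ, 0 < x →
      ENNReal.ofReal (x ^ a / (Real.Gamma a * a)) * ∫⁻ v, ENNReal.ofReal (ffun x v) ∂μV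
        ≤ ℙ {ω | U ω * V ω ≤ x} ∧
      ℙ {ω | U ω * V ω ≤ x} ≤ ENNReal.ofReal (x ^ a / (Real.Gamma a * a) * K) := by
    intro x hx
    have hca : 0 ≤ x ^ a / (Real.Gamma a * a) := by positivity
    have hrw : ∀ v : ℝ, 0 < v → {u : ℝ | u * v ≤ x} = Iic (x / v) := by
      intro v hv; ext u; simp [mem_Iic, le_div_iff₀ hv]
    have hpow : ∀ v : ℝ, 0 < v → (x / v) ^ a = x ^ a * v ^ (-a) := by
      intro v hv
      rw [Real.div_rpow (le_of_lt hx) (le_of_lt hv), Real.rpow_neg (le_of_lt hv), div_eq_mul_inv]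
    constructor
    · rw [hFx x, ← lintegral_const_mul _ (((ffun_meas x)).ennreal_ofReal)]
      refine lintegral_mono_ae ?_
      filter_upwards [haeV] with v hv
      rw [hrw v hv]
      have hb1 := (gamma_cdf_bounds ha (le_of_lt (div_pos hx hv))).1
      refine le_trans (le_of_eq ?_) hb1
      rw [← ENNReal.ofReal_mul hca]
      congr 1
      rw [hffun]; dsimp only; rw [if_pos hv, hpow v hv]
      field_simp
      try ring
    · rw [hFx x]
      have hstep : ∫⁻ v, μU {u | u * v ≤ x} ∂μV
          ≤ ∫⁻ v, ENNReal.ofReal (x ^ a / (Real.Gamma a * a)) * ENNReal.ofReal (hfun v) ∂μV := by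
        refine lintegral_mono_ae ?_
        filter_upwards [haeV] with v hv
        rw [hrw v hv]
        refine le_trans (gamma_cdf_bounds ha (le_of_lt (div_pos hx hv))).2 (le_of_eq ?_)
        rw [← ENNReal.ofReal_mul hca]
        congr 1
        rw [hhfun]; dsimp only; rw [if_pos hv, hpow v hv]
        field_simp
        try ring
      refine le_trans hstep (le_of_eq ?_)
      rw [lintegral_const_mul _ hfun_meas.ennreal_ofReal, hmoment,
        ← ENNReal.ofReal_mul hca]
  -- translate to real bounds on the ratio
  have hDpos : ∀ x : ℝ, 0 < x →
      0 < Real.Gamma (b - a) * x ^ N_R / (Real.Gamma b * Real.Gamma a * a) := by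
    intro x hx
    have : 0 < x ^ N_R := pow_pos hx _
    positivity
  have hDeq : ∀ x : ℝ, 0 < x →
      Real.Gamma (b - a) * x ^ N_R / (Real.Gamma b * Real.Gamma a * a)
        = x ^ a / (Real.Gamma a * a) * K := by
    intro x hx
    rw [hK_def, ha_def, ← Real.rpow_natCast x N_R]
    field_simp
  -- squeeze
  have hsq_up : ∀ x : ℝ, 0 < x →
      (ℙ {ω | U ω * V ω ≤ x}).toReal /
        (Real.Gamma (b - a) * x ^ N_R / (Real.Gamma b * Real.Gamma a * a)) ≤ 1 := by
    intro x hx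
    rw [div_le_one (hDpos x hx)]
    refine ENNReal.toReal_le_of_le_ofReal (le_of_lt (hDpos x hx)) ?_
    rw [hDeq x hx]
    exact (key x hx).2
  have hsq_low : ∀ x : ℝ, 0 < x →
      (∫ v, ffun x v ∂μV) / K ≤
        (ℙ {ω | U ω * V ω ≤ x}).toReal /
          (Real.Gamma (b - a) * x ^ N_R / (Real.Gamma b * Real.Gamma a * a)) := by
    intro x hx
    have hca : 0 ≤ x ^ a / (Real.Gamma a * a) := by positivity
    have hcpos : 0 < x ^ a / (Real.Gamma a * a) := by
      have := Real.rpow_pos_of_pos hx a; positivity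
    have hm : x ^ a / (Real.Gamma a * a) * ∫ v, ffun x v ∂μV
        ≤ (ℙ {ω | U ω * V ω ≤ x}).toReal := by
      have h1 := (key x hx).1
      have h2 : (ENNReal.ofReal (x ^ a / (Real.Gamma a * a)) *
          ∫⁻ v, ENNReal.ofReal (ffun x v) ∂μV).toReal
          = x ^ a / (Real.Gamma a * a) * ∫ v, ffun x v ∂μV := by
        rw [ENNReal.toReal_mul, ENNReal.toReal_ofReal hca,
          integral_eq_lintegral_of_nonneg_ae (ae_of_all _ (ffun_nonneg x))
            (ffun_meas x).aestronglyMeasurable]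
      rw [← h2]
      exact ENNReal.toReal_mono (measure_ne_top _ _) h1
    calc (∫ v, ffun x v ∂μV) / K
        = (x ^ a / (Real.Gamma a * a) * ∫ v, ffun x v ∂μV) /
          (x ^ a / (Real.Gamma a * a) * K) := by
          rw [mul_div_mul_left _ _ (ne_of_gt hcpos)]
      _ ≤ (ℙ {ω | U ω * V ω ≤ x}).toReal / (x ^ a / (Real.Gamma a * a) * K) := by
          have hd : 0 < x ^ a / (Real.Gamma a * a) * K := mul_pos hcpos hKpos
          gcongr
      _ = (ℙ {ω | U ω * V ω ≤ x}).toReal /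
          (Real.Gamma (b - a) * x ^ N_R / (Real.Gamma b * Real.Gamma a * a)) := by
          rw [hDeq x hx]
  have hg : Tendsto (fun x => (∫ v, ffun x v ∂μV) / K) (nhdsWithin 0 (Ioi 0)) (nhds 1) := by
    have := hDCT.div_const K
    rwa [div_self (ne_of_gt hKpos)] at this
  refine tendsto_of_tendsto_of_tendsto_of_le_of_le' hg tendsto_const_nhds ?_ ?_
  · filter_upwards [self_mem_nhdsWithin] with x hx
    exact hsq_low x hx
  · filter_upwards [self_mem_nhdsWithin] with x hx
    exact hsq_up x hx
end

section
/- Let U, V ~ Gamma(N, 1) be independent with positive integer N, and X = U·V. Then lim_{x→0⁺} F_X(x) / (x^N (-ln x) / (N · Γ(N)²)) = 1, where F_X is the CDF of X. -/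
open Real Set Filter MeasureTheory ProbabilityTheory

open Topology

lemma gammaPDF_nat (N : ℕ) (hN : 1 ≤ N) {s : ℝ} (hs : 0 ≤ s) :
    gammaPDF N 1 s = ENNReal.ofReal (s ^ (N-1) * Real.exp (-s) / Real.Gamma N) := by
  rw [gammaPDF_of_nonneg hs]
  congr 1
  rw [one_rpow, one_mul, show ((N:ℝ) - 1) = ((N-1 : ℕ) : ℝ) by rw [Nat.cast_sub hN]; norm_num,
    rpow_natCast]
  ring

lemma integral_pow_Icc (N : ℕ) (hN : 1 ≤ N) {t : ℝ} (ht : 0 ≤ t) :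
    ∫ s in Icc (0:ℝ) t, s ^ (N-1) = t ^ N / N := by
  rw [integral_Icc_eq_integral_Ioc, ← intervalIntegral.integral_of_le ht, integral_pow,
    Nat.sub_add_cancel hN, zero_pow (by omega), sub_zero]
  congr 1
  rw [Nat.cast_sub hN]; ring

lemma gamma_Iic_eq (N : ℕ) {t : ℝ} (ht : 0 ≤ t) :
    gammaMeasure N 1 (Iic t) = ∫⁻ s in Icc 0 t, gammaPDF N 1 s := by
  rw [gammaMeasure, withDensity_apply _ measurableSet_Iic,
    lintegral_Iic_eq_lintegral_Iio_add_Icc _ ht, lintegral_gammaPDF_of_nonpos le_rfl, zero_add]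

lemma gamma_Iic_le (N : ℕ) (hN : 1 ≤ N) {t : ℝ} (ht : 0 ≤ t) :
    gammaMeasure N 1 (Iic t) ≤ ENNReal.ofReal (t ^ N / (N * Real.Gamma N)) := by
  have hΓ : 0 < Real.Gamma N := Real.Gamma_pos_of_pos (by exact_mod_cast hN)
  rw [gamma_Iic_eq N ht]
  calc ∫⁻ s in Icc (0:ℝ) t, gammaPDF N 1 s
      ≤ ∫⁻ s in Icc (0:ℝ) t, ENNReal.ofReal (s ^ (N-1) / Real.Gamma N) := by
        refine setLIntegral_mono (by measurability) (fun s hs => ?_)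
        rw [gammaPDF_nat N hN hs.1]
        refine ENNReal.ofReal_le_ofReal ?_
        have h1 : Real.exp (-s) ≤ 1 := Real.exp_le_one_iff.mpr (by linarith [hs.1])
        have : s ^ (N-1) * Real.exp (-s) ≤ s ^ (N-1) * 1 := by
          gcongr
          exact pow_nonneg hs.1 _
        gcongr
        linarith
    _ = ENNReal.ofReal (∫ s in Icc (0:ℝ) t, s ^ (N-1) / Real.Gamma N) := by
        rw [ofReal_integral_eq_lintegral_ofReal]
        · exact ((continuous_pow _).div_const _).integrableOn_Icc
        · refine (ae_restrict_iff' measurableSet_Icc).mpr (ae_of_all _ fun s hs => ?_)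
          have := hs.1
          positivity
    _ = ENNReal.ofReal (t ^ N / (N * Real.Gamma N)) := by
        rw [integral_div, integral_pow_Icc N hN ht]
        ring

lemma le_gamma_Iic (N : ℕ) (hN : 1 ≤ N) {t : ℝ} (ht : 0 < t) (ht1 : t ≤ 1) :
    ENNReal.ofReal ((1 - t) * t ^ N / (N * Real.Gamma N)) ≤ gammaMeasure N 1 (Iic t) := by
  have hΓ : 0 < Real.Gamma N := Real.Gamma_pos_of_pos (by exact_mod_cast hN)
  rw [gamma_Iic_eq N ht.le]
  calc ENNReal.ofReal ((1 - t) * t ^ N / (N * Real.Gamma N))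
      = ENNReal.ofReal (∫ s in Icc (0:ℝ) t, (1 - t) * s ^ (N-1) / Real.Gamma N) := by
        rw [show (fun s => (1 - t) * s ^ (N-1) / Real.Gamma N)
            = fun s => ((1-t)/Real.Gamma N) * s ^ (N-1) by funext s; ring]
        rw [integral_const_mul, integral_pow_Icc N hN ht.le]
        ring
    _ = ∫⁻ s in Icc (0:ℝ) t, ENNReal.ofReal ((1 - t) * s ^ (N-1) / Real.Gamma N) := by
        rw [ofReal_integral_eq_lintegral_ofReal]
        · exact ((continuous_const.mul (continuous_pow _)).div_const _).integrableOn_Icc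
        · refine (ae_restrict_iff' measurableSet_Icc).mpr (ae_of_all _ fun s hs => ?_)
          have := hs.1
          have h1t : (0:ℝ) ≤ 1 - t := by linarith
          positivity
    _ ≤ ∫⁻ s in Icc (0:ℝ) t, gammaPDF N 1 s := by
        refine setLIntegral_mono ((measurable_gammaPDFReal _ _).ennreal_ofReal) (fun s hs => ?_)
        rw [gammaPDF_nat N hN hs.1]
        refine ENNReal.ofReal_le_ofReal ?_
        have h1 : 1 - t ≤ Real.exp (-s) := by
          have := Real.add_one_le_exp (-s)
          have := hs.2
          linarith
        have : (1-t) * s ^ (N-1) ≤ s ^ (N-1) * Real.exp (-s) := by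
          rw [mul_comm]
          gcongr
          exact pow_nonneg hs.1 _
        gcongr

set_option maxHeartbeats 1000000 in
lemma prod_upper (N : ℕ) (hN : 1 ≤ N) {x : ℝ} (hx : 0 < x) (hx1 : x < 1) :
    (gammaMeasure N 1).prod (gammaMeasure N 1) {p : ℝ × ℝ | p.1 * p.2 ≤ x}
      ≤ ENNReal.ofReal (x ^ N / (N * Real.Gamma N ^ 2) * (-Real.log x + (1 + Real.Gamma N))) := by
  have hΓ : 0 < Real.Gamma N := Real.Gamma_pos_of_pos (by exact_mod_cast hN)
  have hNpos : (0:ℝ) < N := by exact_mod_cast hN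
  set μ := gammaMeasure (N:ℝ) 1 with hμ
  haveI : IsProbabilityMeasure μ := isProbabilityMeasure_gammaMeasure hNpos one_pos
  set c : ℝ := x ^ N / (N * Real.Gamma N ^ 2) with hc
  have hcpos : 0 < c := by positivity
  have hL : 0 < -Real.log x := by
    have := Real.log_neg hx hx1; linarith
  -- split the set
  have hsub : {p : ℝ × ℝ | p.1 * p.2 ≤ x} ⊆
      (Iic x ×ˢ univ) ∪ {p : ℝ × ℝ | x < p.1 ∧ p.2 ≤ x / p.1} := by
    rintro ⟨u, v⟩ h
    simp only [mem_setOf_eq] at h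
    by_cases hu : u ≤ x
    · exact Or.inl ⟨hu, mem_univ _⟩
    · push_neg at hu
      exact Or.inr ⟨hu, (le_div_iff₀ (hx.trans hu)).mpr (by linarith [mul_comm u v])⟩
  have hBmeas : MeasurableSet {p : ℝ × ℝ | x < p.1 ∧ p.2 ≤ x / p.1} :=
    (measurableSet_lt measurable_const measurable_fst).inter
      (measurableSet_le measurable_snd (measurable_const.div measurable_fst))
  have h1 : μ.prod μ (Iic x ×ˢ univ) ≤ ENNReal.ofReal (c * Real.Gamma N) := by
    rw [Measure.prod_prod, measure_univ, mul_one]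
    refine (gamma_Iic_le N hN hx.le).trans (le_of_eq ?_)
    congr 1
    rw [hc]
    field_simp
  have h2 : μ.prod μ {p : ℝ × ℝ | x < p.1 ∧ p.2 ≤ x / p.1}
      ≤ ENNReal.ofReal (c * (-Real.log x)) + ENNReal.ofReal c := by
    rw [Measure.prod_apply hBmeas]
    have hslice : ∀ u : ℝ, μ (Prod.mk u ⁻¹' {p : ℝ × ℝ | x < p.1 ∧ p.2 ≤ x / p.1})
        ≤ (Ioi x).indicator (fun u => ENNReal.ofReal ((x/u) ^ N / (N * Real.Gamma N))) u := by
      intro u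
      by_cases hu : x < u
      · rw [indicator_of_mem (show u ∈ Ioi x from hu)]
        have : Prod.mk u ⁻¹' {p : ℝ × ℝ | x < p.1 ∧ p.2 ≤ x / p.1} = Iic (x/u) := by
          ext v; simp [hu]
        rw [this]
        exact gamma_Iic_le N hN (div_nonneg hx.le (hx.trans hu).le)
      · have : Prod.mk u ⁻¹' {p : ℝ × ℝ | x < p.1 ∧ p.2 ≤ x / p.1} = ∅ := by
          ext v; simp [hu]
        rw [this, indicator_of_notMem (show u ∉ Ioi x from hu)]
        simp
    refine le_trans (lintegral_mono hslice) ?_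
    rw [lintegral_indicator measurableSet_Ioi]
    have hg : Measurable fun a : ℝ => ENNReal.ofReal ((x / a) ^ N / ((N:ℝ) * Real.Gamma N)) :=
      (((measurable_id'.const_div x).pow_const N).div_const _).ennreal_ofReal
    have hf : Measurable (gammaPDF (N:ℝ) 1) := (measurable_gammaPDFReal _ _).ennreal_ofReal
    rw [hμ, gammaMeasure, setLIntegral_withDensity_eq_setLIntegral_mul _ hf hg measurableSet_Ioi]
    have hpoint : ∀ u ∈ Ioi x,
        (gammaPDF N 1 * fun u => ENNReal.ofReal ((x/u) ^ N / (N * Real.Gamma N))) u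
          ≤ (Ioc x 1).indicator (fun u => ENNReal.ofReal (c * (1/u))) u
            + (Ioi 1).indicator (fun u => ENNReal.ofReal (c * Real.exp (-u))) u := by
      intro u hu
      have hux : x < u := hu
      have hu0 : 0 < u := hx.trans hux
      have hprod : (gammaPDF N 1 * fun u => ENNReal.ofReal ((x/u) ^ N / (N * Real.Gamma N))) u
          = ENNReal.ofReal (c * (Real.exp (-u) / u)) := by
        simp only [Pi.mul_apply]
        rw [gammaPDF_nat N hN hu0.le, ← ENNReal.ofReal_mul (by positivity)]
        congr 1
        have hupow : u * u ^ (N-1) = u ^ N := by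
          rw [← pow_succ', Nat.sub_add_cancel hN]
        rw [div_pow, hc]
        field_simp
        rw [← hupow]
        ring
      rw [hprod]
      by_cases hu1 : u ≤ 1
      · rw [indicator_of_mem (show u ∈ Ioc x 1 from ⟨hux, hu1⟩),
          indicator_of_notMem (show u ∉ Ioi 1 by simp; linarith), add_zero]
        refine ENNReal.ofReal_le_ofReal ?_
        have he : Real.exp (-u) ≤ 1 := Real.exp_le_one_iff.mpr (by linarith)
        refine mul_le_mul_of_nonneg_left ?_ hcpos.le
        exact (div_le_div_iff_of_pos_right hu0).mpr he
      · push_neg at hu1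
        rw [indicator_of_notMem (show u ∉ Ioc x 1 from fun h => absurd h.2 (by linarith)),
          indicator_of_mem (show u ∈ Ioi 1 from hu1), zero_add]
        refine ENNReal.ofReal_le_ofReal ?_
        refine mul_le_mul_of_nonneg_left ?_ hcpos.le
        exact div_le_self (Real.exp_pos _).le (by linarith)
    refine le_trans (setLIntegral_mono' measurableSet_Ioi hpoint) ?_
    refine le_trans (setLIntegral_le_lintegral _ _) ?_
    have hind1 : Measurable ((Ioc x 1).indicator fun u : ℝ => ENNReal.ofReal (c * (1/u))) :=
      (((measurable_id'.const_div 1).const_mul c).ennreal_ofReal).indicator measurableSet_Ioc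
    rw [lintegral_add_left hind1]
    rw [lintegral_indicator measurableSet_Ioc, lintegral_indicator measurableSet_Ioi]
    gcongr
    · rw [← ofReal_integral_eq_lintegral_ofReal]
      · refine ENNReal.ofReal_le_ofReal (le_of_eq ?_)
        rw [integral_const_mul, ← intervalIntegral.integral_of_le hx1.le,
          integral_one_div (by rw [uIcc_of_le hx1.le]; intro h; exact absurd h.1 (by linarith)),
          Real.log_div one_ne_zero hx.ne', Real.log_one]
        ring
      · refine (ContinuousOn.integrableOn_Icc ?_).mono_set Ioc_subset_Icc_self
        exact continuousOn_const.mul (continuousOn_const.div continuousOn_id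
          (fun u hu => by rcases hu with ⟨h1, h2⟩; intro h; rw [h] at h1; linarith))
      · refine (ae_restrict_iff' measurableSet_Ioc).mpr (ae_of_all _ fun u hu => ?_)
        have h1 := hu.1
        have hu0 : 0 < u := hx.trans h1
        positivity
    · rw [← ofReal_integral_eq_lintegral_ofReal]
      · rw [integral_const_mul, integral_exp_neg_Ioi]
        refine ENNReal.ofReal_le_ofReal ?_
        have h1 : Real.exp (-1 : ℝ) ≤ 1 := Real.exp_le_one_iff.mpr (by norm_num)
        nlinarith
      · have := exp_neg_integrableOn_Ioi (1:ℝ) (one_pos)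
        simp only [neg_mul, one_mul] at this
        exact this.const_mul c
      · exact ae_of_all _ fun u => by positivity
  calc μ.prod μ {p : ℝ × ℝ | p.1 * p.2 ≤ x}
      ≤ μ.prod μ ((Iic x ×ˢ univ) ∪ {p : ℝ × ℝ | x < p.1 ∧ p.2 ≤ x / p.1}) := measure_mono hsub
    _ ≤ μ.prod μ (Iic x ×ˢ univ) + μ.prod μ {p : ℝ × ℝ | x < p.1 ∧ p.2 ≤ x / p.1} :=
        measure_union_le _ _
    _ ≤ ENNReal.ofReal (c * Real.Gamma N) + (ENNReal.ofReal (c * (-Real.log x)) + ENNReal.ofReal c) := by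
        gcongr
    _ = ENNReal.ofReal (c * (-Real.log x + (1 + Real.Gamma N))) := by
        rw [← ENNReal.ofReal_add (by positivity) (by positivity),
          ← ENNReal.ofReal_add (by positivity) (by positivity)]
        congr 1
        ring

lemma integral_aux {x : ℝ} (hx : 0 < x) (hx1 : x < 1) :
    ∫ u in Ioo x 1, (1/u - 1 - x/u^2) = -Real.log x - 2*(1-x) := by
  rw [← integral_Ioc_eq_integral_Ioo, ← intervalIntegral.integral_of_le hx1.le]
  have huIcc : uIcc x 1 = Icc x 1 := uIcc_of_le hx1.le
  have hint : ∀ u ∈ uIcc x 1, HasDerivAt (fun u : ℝ => Real.log u - u + x * u⁻¹)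
      (1/u - 1 - x/u^2) u := by
    intro u hu
    rw [huIcc] at hu
    have hu0 : 0 < u := lt_of_lt_of_le hx hu.1
    have H := ((Real.hasDerivAt_log hu0.ne').sub (hasDerivAt_id u)).add
      ((hasDerivAt_inv hu0.ne').const_mul x)
    exact H.congr_deriv (by ring)
  rw [intervalIntegral.integral_eq_sub_of_hasDerivAt hint ?_]
  · rw [Real.log_one, mul_inv_cancel₀ hx.ne', inv_one, mul_one]
    ring
  · apply ContinuousOn.intervalIntegrable
    rw [huIcc]
    have hne : ∀ u ∈ Icc x 1, u ≠ 0 := fun u hu => (lt_of_lt_of_le hx hu.1).ne'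
    exact ((continuousOn_const.div continuousOn_id hne).sub continuousOn_const).sub
      (continuousOn_const.div (continuousOn_pow 2) (fun u hu => pow_ne_zero 2 (hne u hu)))

lemma prod_lower (N : ℕ) (hN : 1 ≤ N) {x : ℝ} (hx : 0 < x) (hx1 : x < 1) :
    ENNReal.ofReal (x ^ N / (N * Real.Gamma N ^ 2) * (-Real.log x - 2*(1-x)))
      ≤ (gammaMeasure N 1).prod (gammaMeasure N 1) {p : ℝ × ℝ | p.1 * p.2 ≤ x} := by
  have hΓ : 0 < Real.Gamma N := Real.Gamma_pos_of_pos (by exact_mod_cast hN)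
  have hNpos : (0:ℝ) < N := by exact_mod_cast hN
  set μ := gammaMeasure (N:ℝ) 1 with hμ
  haveI : IsProbabilityMeasure μ := isProbabilityMeasure_gammaMeasure hNpos one_pos
  set c : ℝ := x ^ N / (N * Real.Gamma N ^ 2) with hc
  have hcpos : 0 < c := by positivity
  set B : Set (ℝ × ℝ) := {p : ℝ × ℝ | (x < p.1 ∧ p.1 < 1) ∧ p.2 ≤ x / p.1} with hB
  have hBmeas : MeasurableSet B :=
    ((measurableSet_lt measurable_const measurable_fst).inter
      (measurableSet_lt measurable_fst measurable_const)).inter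
      (measurableSet_le measurable_snd (measurable_const.div measurable_fst))
  have hsub : B ⊆ {p : ℝ × ℝ | p.1 * p.2 ≤ x} := by
    rintro ⟨u, v⟩ ⟨⟨hxu, hu1⟩, hv⟩
    have hu0 : 0 < u := hx.trans hxu
    simp only [mem_setOf_eq]
    calc u * v ≤ u * (x / u) := by gcongr
      _ = x := by field_simp
  refine le_trans ?_ (measure_mono hsub)
  rw [Measure.prod_apply hBmeas]
  have hg : Measurable fun u : ℝ =>
      ENNReal.ofReal ((1 - x/u) * (x/u) ^ N / ((N:ℝ) * Real.Gamma N)) :=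
    (((measurable_const.sub (measurable_id'.const_div x)).mul
      ((measurable_id'.const_div x).pow_const N)).div_const _).ennreal_ofReal
  have hf : Measurable (gammaPDF (N:ℝ) 1) := (measurable_gammaPDFReal _ _).ennreal_ofReal
  have hslice : ∀ u : ℝ,
      (Ioo x 1).indicator (fun u => ENNReal.ofReal ((1 - x/u) * (x/u) ^ N / ((N:ℝ) * Real.Gamma N))) u
        ≤ μ (Prod.mk u ⁻¹' B) := by
    intro u
    by_cases hu : u ∈ Ioo x 1
    · rw [indicator_of_mem hu]
      have hu0 : 0 < u := hx.trans hu.1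
      have : Prod.mk u ⁻¹' B = Iic (x/u) := by
        ext v; simp [hB, hu.1, hu.2]
      rw [this]
      exact le_gamma_Iic N hN (by positivity) ((div_le_one hu0).mpr hu.1.le)
    · rw [indicator_of_notMem hu]
      exact zero_le
  refine le_trans ?_ (lintegral_mono hslice)
  rw [lintegral_indicator measurableSet_Ioo, hμ, gammaMeasure,
    setLIntegral_withDensity_eq_setLIntegral_mul _ hf hg measurableSet_Ioo]
  have hpoint : ∀ u ∈ Ioo x 1,
      ENNReal.ofReal (c * ((1 - x/u) * (1 - u) / u))
        ≤ (gammaPDF (N:ℝ) 1 * fun u => ENNReal.ofReal ((1 - x/u) * (x/u) ^ N / ((N:ℝ) * Real.Gamma N))) u := by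
    intro u hu
    have hu0 : 0 < u := hx.trans hu.1
    have hxu : x/u < 1 := (div_lt_one hu0).mpr hu.1
    have hprod : (gammaPDF (N:ℝ) 1 * fun u => ENNReal.ofReal ((1 - x/u) * (x/u) ^ N / ((N:ℝ) * Real.Gamma N))) u
        = ENNReal.ofReal (c * ((1 - x/u) * Real.exp (-u) / u)) := by
      simp only [Pi.mul_apply]
      rw [gammaPDF_nat N hN hu0.le, ← ENNReal.ofReal_mul (by positivity)]
      congr 1
      have hupow : u * u ^ (N-1) = u ^ N := by
        rw [← pow_succ', Nat.sub_add_cancel hN]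
      rw [div_pow, hc]
      field_simp
      rw [← hupow]
      ring
    rw [hprod]
    refine ENNReal.ofReal_le_ofReal ?_
    refine mul_le_mul_of_nonneg_left ?_ hcpos.le
    have h1u : 1 - u ≤ Real.exp (-u) := by
      have := Real.add_one_le_exp (-u)
      linarith
    have hnn : 0 ≤ 1 - x/u := by linarith
    have : (1 - x/u) * (1 - u) ≤ (1 - x/u) * Real.exp (-u) :=
      mul_le_mul_of_nonneg_left h1u hnn
    exact (div_le_div_iff_of_pos_right hu0).mpr this
  refine le_trans ?_ (setLIntegral_mono (hf.mul hg) hpoint)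
  rw [← ofReal_integral_eq_lintegral_ofReal]
  · refine ENNReal.ofReal_le_ofReal ?_
    rw [integral_const_mul]
    refine mul_le_mul_of_nonneg_left ?_ hcpos.le
    rw [← integral_aux hx hx1]
    refine setIntegral_mono_on ?_ ?_ measurableSet_Ioo (fun u hu => ?_)
    · have hne : ∀ u ∈ Icc x 1, u ≠ 0 := fun u hu => (lt_of_lt_of_le hx hu.1).ne'
      refine (ContinuousOn.integrableOn_Icc ?_).mono_set Ioo_subset_Icc_self
      exact ((continuousOn_const.div continuousOn_id hne).sub continuousOn_const).sub
        (continuousOn_const.div (continuousOn_pow 2) (fun u hu => pow_ne_zero 2 (hne u hu)))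
    · have hne : ∀ u ∈ Icc x 1, u ≠ 0 := fun u hu => (lt_of_lt_of_le hx hu.1).ne'
      refine (ContinuousOn.integrableOn_Icc ?_).mono_set Ioo_subset_Icc_self
      exact ((continuousOn_const.sub (continuousOn_const.div continuousOn_id hne)).mul
        (continuousOn_const.sub continuousOn_id)).div continuousOn_id hne
    · have hu0 : 0 < u := hx.trans hu.1
      have key : (1 - x/u) * (1 - u) / u - (1/u - 1 - x/u^2) = x/u := by
        field_simp
        ring
      nlinarith [div_pos hx hu0]
  · have hne : ∀ u ∈ Icc x 1, u ≠ 0 := fun u hu => (lt_of_lt_of_le hx hu.1).ne'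
    refine ((ContinuousOn.integrableOn_Icc ?_).mono_set Ioo_subset_Icc_self).integrable.const_mul c
    exact ((continuousOn_const.sub (continuousOn_const.div continuousOn_id hne)).mul
      (continuousOn_const.sub continuousOn_id)).div continuousOn_id hne
  · refine (ae_restrict_iff' measurableSet_Ioo).mpr (ae_of_all _ fun u hu => ?_)
    have hu0 : 0 < u := hx.trans hu.1
    have h1 : x/u < 1 := (div_lt_one hu0).mpr hu.1
    have h2 : u < 1 := hu.2
    have hA : (0:ℝ) ≤ 1 - x/u := by linarith
    have hBB : (0:ℝ) ≤ 1 - u := by linarith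
    positivity

theorem cdf_product_gammas_asymp_balanced
    {Ω : Type*} [MeasureSpace Ω] [IsProbabilityMeasure (ℙ : Measure Ω)]
    (N : ℕ) (hN : 1 ≤ N)
    (U V : Ω → ℝ) (hU : Measurable U) (hV : Measurable V)
    (hUlaw : Measure.map U ℙ = gammaMeasure N 1)
    (hVlaw : Measure.map V ℙ = gammaMeasure N 1)
    (hindep : IndepFun U V ℙ) :
    Tendsto (fun x : ℝ =>
        (ℙ {ω | U ω * V ω ≤ x}).toReal /
          (x ^ N * (-Real.log x) / (N * (Real.Gamma N) ^ 2)))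
      (nhdsWithin 0 (Ioi 0)) (nhds 1) := by
  have hΓ : 0 < Real.Gamma N := Real.Gamma_pos_of_pos (by exact_mod_cast hN)
  have hNpos : (0:ℝ) < N := by exact_mod_cast hN
  set μ := gammaMeasure (N:ℝ) 1 with hμ
  haveI : IsProbabilityMeasure μ := isProbabilityMeasure_gammaMeasure hNpos one_pos
  have hmap : ∀ y : ℝ, ℙ {ω | U ω * V ω ≤ y} = μ.prod μ {p : ℝ × ℝ | p.1 * p.2 ≤ y} := by
    intro y
    have hS : MeasurableSet {p : ℝ × ℝ | p.1 * p.2 ≤ y} :=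
      measurableSet_le (measurable_fst.mul measurable_snd) measurable_const
    have h1 : {ω | U ω * V ω ≤ y} = (fun ω => (U ω, V ω)) ⁻¹' {p : ℝ × ℝ | p.1 * p.2 ≤ y} := rfl
    rw [h1, ← Measure.map_apply (hU.prodMk hV) hS,
      (indepFun_iff_map_prod_eq_prod_map_map hU.aemeasurable hV.aemeasurable).mp hindep,
      hUlaw, hVlaw]
  -- eventual bounds
  have hmem : Ioo (0:ℝ) 1 ∈ 𝓝[>] (0:ℝ) := Ioo_mem_nhdsGT_of_mem ⟨le_refl 0, one_pos⟩
  have hlogtop : Tendsto (fun x : ℝ => -Real.log x) (𝓝[>] (0:ℝ)) atTop :=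
    tendsto_neg_atTop_iff.mpr Real.tendsto_log_nhdsGT_zero
  have hinv : Tendsto (fun x : ℝ => (-Real.log x)⁻¹) (𝓝[>] (0:ℝ)) (𝓝 0) :=
    hlogtop.inv_tendsto_atTop
  have hlow : Tendsto (fun x : ℝ => 1 - 2*(1-x) * (-Real.log x)⁻¹) (𝓝[>] (0:ℝ)) (𝓝 1) := by
    have h2 : Tendsto (fun x : ℝ => 2*(1-x)) (𝓝[>] (0:ℝ)) (𝓝 (2*(1-0))) :=
      ((continuous_const.mul (continuous_const.sub continuous_id)).tendsto 0).mono_left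
        nhdsWithin_le_nhds
    have h3 := (tendsto_const_nhds (x := (1:ℝ))).sub (h2.mul hinv)
    simpa using h3
  have hup : Tendsto (fun x : ℝ => 1 + (1 + Real.Gamma N) * (-Real.log x)⁻¹)
      (𝓝[>] (0:ℝ)) (𝓝 1) := by
    have h3 := (tendsto_const_nhds (x := (1:ℝ))).add
      ((tendsto_const_nhds (x := (1 + Real.Gamma (N:ℝ)))).mul hinv)
    simpa using h3
  refine tendsto_of_tendsto_of_tendsto_of_le_of_le' hlow hup ?_ ?_
  · filter_upwards [hmem] with x hx
    obtain ⟨hx0, hx1⟩ := hx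
    have hL : 0 < -Real.log x := by have := Real.log_neg hx0 hx1; linarith
    set c : ℝ := x ^ N / (N * Real.Gamma N ^ 2) with hc
    have hcpos : 0 < c := by positivity
    have hdenom : x ^ N * (-Real.log x) / (N * Real.Gamma N ^ 2) = c * (-Real.log x) := by
      rw [hc]; ring
    have hlower : c * (-Real.log x - 2*(1-x)) ≤ (ℙ {ω | U ω * V ω ≤ x}).toReal := by
      rw [hmap x]
      exact (ENNReal.ofReal_le_iff_le_toReal (measure_ne_top _ _)).mp (prod_lower N hN hx0 hx1)
    calc (1:ℝ) - 2*(1-x) * (-Real.log x)⁻¹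
        = (c * (-Real.log x - 2*(1-x))) / (c * (-Real.log x)) := by
          rw [mul_div_mul_left _ _ hcpos.ne', sub_div, div_self hL.ne', div_eq_mul_inv]
      _ ≤ (ℙ {ω | U ω * V ω ≤ x}).toReal / (x ^ N * (-Real.log x) / (N * Real.Gamma N ^ 2)) := by
          rw [hdenom]
          exact (div_le_div_iff_of_pos_right (by positivity)).mpr hlower
  · filter_upwards [hmem] with x hx
    obtain ⟨hx0, hx1⟩ := hx
    have hL : 0 < -Real.log x := by have := Real.log_neg hx0 hx1; linarith
    set c : ℝ := x ^ N / (N * Real.Gamma N ^ 2) with hc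
    have hcpos : 0 < c := by positivity
    have hdenom : x ^ N * (-Real.log x) / (N * Real.Gamma N ^ 2) = c * (-Real.log x) := by
      rw [hc]; ring
    have hupper : (ℙ {ω | U ω * V ω ≤ x}).toReal ≤ c * (-Real.log x + (1 + Real.Gamma N)) := by
      rw [hmap x]
      exact ENNReal.toReal_le_of_le_ofReal (by positivity) (prod_upper N hN hx0 hx1)
    calc (ℙ {ω | U ω * V ω ≤ x}).toReal / (x ^ N * (-Real.log x) / (N * Real.Gamma N ^ 2))
        ≤ (c * (-Real.log x + (1 + Real.Gamma N))) / (c * (-Real.log x)) := by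
          rw [hdenom]
          exact (div_le_div_iff_of_pos_right (by positivity)).mpr hupper
      _ = 1 + (1 + Real.Gamma N) * (-Real.log x)⁻¹ := by
          rw [mul_div_mul_left _ _ hcpos.ne', add_div, div_self hL.ne', div_eq_mul_inv]
end

section
/- Let U ~ Gamma(N_R,1) and V ~ Gamma(N_T,1) be independent with N_T ≥ N_R, and X = UV. Then for s < 0, the moment generating function E[e^{(γ/N_T) s X}] equals (−N_T/(γ s))^{N_T} Ψ(N_T, |N_T−N_R|+1; −N_T/(γ s)), where Ψ(α, γ; z) is Tricomi's confluent hypergeometric function. -/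
open Real Set Filter MeasureTheory ProbabilityTheory

open scoped ENNReal NNReal

lemma gamma_ae_pos {a r : ℝ} : ∀ᵐ x ∂(gammaMeasure a r), 0 < x := by
  rw [ae_iff]
  have hset : {x : ℝ | ¬ 0 < x} = Iio 0 ∪ {0} := by
    ext x; simp [not_lt, le_iff_lt_or_eq, or_comm, eq_comm]
  rw [hset]
  refine measure_union_null ?_ ?_
  · rw [gammaMeasure, withDensity_apply _ measurableSet_Iio]
    exact lintegral_gammaPDF_of_nonpos le_rfl
  · exact (withDensity_absolutelyContinuous _ _) (measure_singleton 0)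

lemma integral_gamma_eq (n : ℕ) (hn : 0 < n) (g : ℝ → ℝ) :
    ∫ x, g x ∂(gammaMeasure n 1) =
      (Gamma n)⁻¹ * ∫ x in Ioi 0, x ^ ((n : ℝ) - 1) * Real.exp (-x) * g x := by
  have hmeas : Measurable fun x => (gammaPDFReal n 1 x).toNNReal :=
    (measurable_gammaPDFReal _ _).real_toNNReal
  have hμ : gammaMeasure (n : ℝ) 1
      = volume.withDensity fun x => ((gammaPDFReal (n : ℝ) 1 x).toNNReal : ℝ≥0∞) := rfl
  rw [hμ, integral_withDensity_eq_integral_smul hmeas]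
  have h0 : ∀ᵐ x : ℝ, x ≠ (0 : ℝ) := by
    rw [ae_iff]; simpa using measure_singleton (0 : ℝ)
  have key : (fun x => (gammaPDFReal n 1 x).toNNReal • g x) =ᵐ[volume]
      (Ioi (0:ℝ)).indicator (fun x => (Gamma n)⁻¹ * (x ^ ((n:ℝ) - 1) * Real.exp (-x) * g x)) := by
    filter_upwards [h0] with x hx
    rcases lt_or_gt_of_ne hx with hneg | hpos
    · rw [indicator_of_notMem (by simpa using hneg.le)]
      simp [gammaPDFReal, not_le.mpr hneg]
    · rw [indicator_of_mem (mem_Ioi.mpr hpos)]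
      rw [NNReal.smul_def, Real.coe_toNNReal _ (gammaPDFReal_nonneg (by positivity) one_pos x)]
      simp only [gammaPDFReal, if_pos hpos.le, one_rpow, one_mul, smul_eq_mul]
      ring
  rw [integral_congr_ae key, integral_indicator measurableSet_Ioi, integral_const_mul]

lemma integral_exp_gamma (n : ℕ) (hn : 0 < n) (d : ℝ) (hd : d < 0) :
    ∫ u, Real.exp (d * u) ∂(gammaMeasure n 1) = (1 - d) ^ (-(n : ℝ)) := by
  rw [integral_gamma_eq n hn]
  have hfun : (fun x : ℝ => x ^ ((n:ℝ) - 1) * Real.exp (-x) * Real.exp (d * x))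
      = fun x => x ^ ((n:ℝ) - 1) * Real.exp (-((1 - d) * x)) := by
    funext x; rw [mul_assoc, ← Real.exp_add]; ring_nf
  have h1d : (0:ℝ) < 1 - d := by linarith
  rw [hfun, integral_rpow_mul_exp_neg_mul_Ioi (by positivity : (0:ℝ) < (n:ℝ)) h1d]
  rw [one_div, ← Real.rpow_neg_one (1 - d), ← Real.rpow_mul h1d.le, neg_one_mul]
  rw [mul_comm, mul_assoc, mul_inv_cancel₀ (Real.Gamma_pos_of_pos (by positivity : (0:ℝ) < (n:ℝ))).ne', mul_one]

/-- Tricomi's confluent hypergeometric function `Ψ(a, b; z)` (also written `U(a,b,z)`), via its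
standard integral representation, valid for `a > 0` and `z > 0`. -/
noncomputable def tricomiU (a b z : ℝ) : ℝ :=
  (1 / Real.Gamma a) *
    ∫ t in Ioi (0 : ℝ), Real.exp (-z * t) * t ^ (a - 1) * (1 + t) ^ (b - a - 1)

theorem mgf_product_gammas
    {Ω : Type*} [MeasureSpace Ω] [IsProbabilityMeasure (ℙ : Measure Ω)]
    (N_T N_R : ℕ) (hNR : 1 ≤ N_R) (h : N_R ≤ N_T)
    (γ : ℝ) (hγ : 0 < γ) (s : ℝ) (hs : s < 0)
    (U V : Ω → ℝ) (hU : Measurable U) (hV : Measurable V)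
    (hUlaw : Measure.map U ℙ = gammaMeasure N_R 1)
    (hVlaw : Measure.map V ℙ = gammaMeasure N_T 1)
    (hindep : IndepFun U V ℙ) :
    ∫ ω, Real.exp ((γ / N_T) * s * (U ω * V ω)) ∂ℙ
      = (-(N_T : ℝ) / (γ * s)) ^ (N_T : ℕ) *
          tricomiU N_T (|(N_T : ℝ) - N_R| + 1) (-(N_T : ℝ) / (γ * s)) := by
  have hNTn : 0 < N_T := lt_of_lt_of_le hNR h
  have hNT : (0:ℝ) < N_T := by exact_mod_cast hNTn
  have hNRr : (0:ℝ) < N_R := by exact_mod_cast hNR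
  set c : ℝ := γ / N_T * s with hc_def
  have hc : c < 0 := mul_neg_of_pos_of_neg (div_pos hγ hNT) hs
  set z : ℝ := -(N_T:ℝ) / (γ * s) with hz_def
  have hz : 0 < z := div_pos_of_neg_of_neg (by linarith) (mul_neg_of_pos_of_neg hγ hs)
  have hcz : c * z = -1 := by
    have hγs : γ * s ≠ 0 := (mul_neg_of_pos_of_neg hγ hs).ne
    rw [hc_def, hz_def]
    field_simp
    rw [div_self hs.ne]
  haveI : IsProbabilityMeasure (gammaMeasure (N_R:ℝ) 1) :=
    isProbabilityMeasure_gammaMeasure hNRr one_pos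
  haveI : IsProbabilityMeasure (gammaMeasure (N_T:ℝ) 1) :=
    isProbabilityMeasure_gammaMeasure hNT one_pos
  have hmap : Measure.map (fun ω => (V ω, U ω)) ℙ
      = (gammaMeasure N_T 1).prod (gammaMeasure N_R 1) := by
    rw [← hVlaw, ← hUlaw]
    exact (indepFun_iff_map_prod_eq_prod_map_map hV.aemeasurable hU.aemeasurable).mp hindep.symm
  have hstep1 : ∫ ω, Real.exp ((γ / N_T) * s * (U ω * V ω)) ∂ℙ
      = ∫ p : ℝ × ℝ, Real.exp (c * (p.1 * p.2))
          ∂((gammaMeasure N_T 1).prod (gammaMeasure N_R 1)) := by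
    have hfun : (fun ω => Real.exp ((γ / N_T) * s * (U ω * V ω)))
        = fun ω => (fun p : ℝ × ℝ => Real.exp (c * (p.1 * p.2))) (V ω, U ω) := by
      funext ω
      simp only
      rw [hc_def]; ring_nf
    have hmeasf : AEStronglyMeasurable (fun p : ℝ × ℝ => Real.exp (c * (p.1 * p.2)))
        (Measure.map (fun ω => (V ω, U ω)) ℙ) :=
      Measurable.aestronglyMeasurable (by fun_prop)
    rw [hfun, ← integral_map (hV.prodMk hU).aemeasurable hmeasf, hmap]
  have hae1 : ∀ᵐ p : ℝ×ℝ ∂((gammaMeasure N_T 1).prod (gammaMeasure N_R 1)),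
      0 < p.1 ∧ 0 < p.2 := by
    rw [ae_iff]
    have hbad : {p : ℝ×ℝ | ¬(0 < p.1 ∧ 0 < p.2)}
        ⊆ ({x : ℝ | ¬ 0 < x} ×ˢ univ) ∪ (univ ×ˢ {x : ℝ | ¬ 0 < x}) := by
      intro p hp
      simp only [mem_setOf_eq, not_and_or] at hp
      rcases hp with hp | hp
      · exact Or.inl ⟨hp, mem_univ _⟩
      · exact Or.inr ⟨mem_univ _, hp⟩
    refine measure_mono_null hbad (measure_union_null ?_ ?_)
    · rw [Measure.prod_prod]
      have := gamma_ae_pos (a := (N_T:ℝ)) (r := 1)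
      rw [ae_iff] at this
      simp only [not_lt] at this
      simp [this]
    · rw [Measure.prod_prod]
      have := gamma_ae_pos (a := (N_R:ℝ)) (r := 1)
      rw [ae_iff] at this
      simp only [not_lt] at this
      simp [this]
  have hint : Integrable (fun p : ℝ×ℝ => Real.exp (c * (p.1 * p.2)))
      ((gammaMeasure N_T 1).prod (gammaMeasure N_R 1)) := by
    refine (integrable_const (1:ℝ)).mono'
      (Measurable.aestronglyMeasurable (by fun_prop)) ?_
    filter_upwards [hae1] with p hp
    rw [norm_of_nonneg (Real.exp_nonneg _), Real.exp_le_one_iff]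
    nlinarith [mul_pos hp.1 hp.2, hc]
  rw [hstep1, MeasureTheory.integral_prod _ hint]
  have hinner : ∫ v, (∫ u, Real.exp (c * (v * u)) ∂gammaMeasure N_R 1) ∂gammaMeasure N_T 1
      = ∫ v, (1 - c * v) ^ (-(N_R:ℝ)) ∂gammaMeasure N_T 1 := by
    refine integral_congr_ae ?_
    filter_upwards [gamma_ae_pos (a := (N_T:ℝ)) (r := 1)] with v hv
    have harg : ∀ u : ℝ, c * (v * u) = (c * v) * u := fun u => by ring
    simp_rw [harg]
    exact integral_exp_gamma N_R hNR (c*v) (mul_neg_of_neg_of_pos hc hv)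
  rw [hinner, integral_gamma_eq N_T hNTn]
  -- change of variables v = z * t
  have hcov := integral_comp_mul_left_Ioi
    (fun v : ℝ => v ^ ((N_T:ℝ)-1) * Real.exp (-v) * (1 - c*v) ^ (-(N_R:ℝ))) 0 hz
  rw [mul_zero, smul_eq_mul] at hcov
  have hIoi : ∫ v in Ioi (0:ℝ), v ^ ((N_T:ℝ)-1) * Real.exp (-v) * (1 - c*v) ^ (-(N_R:ℝ))
      = z * ∫ t in Ioi (0:ℝ),
          (z*t) ^ ((N_T:ℝ)-1) * Real.exp (-(z*t)) * (1 - c*(z*t)) ^ (-(N_R:ℝ)) := by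
    rw [hcov, ← mul_assoc, mul_inv_cancel₀ hz.ne', one_mul]
  rw [hIoi]
  have hgz : EqOn
      (fun t : ℝ => (z*t) ^ ((N_T:ℝ)-1) * Real.exp (-(z*t)) * (1 - c*(z*t)) ^ (-(N_R:ℝ)))
      (fun t : ℝ => z ^ ((N_T:ℝ)-1) *
        (Real.exp (-z*t) * t ^ ((N_T:ℝ)-1) * (1+t) ^ (-(N_R:ℝ)))) (Ioi 0) := by
    intro t ht
    have h1 : 1 - c*(z*t) = 1 + t := by
      rw [show c*(z*t) = (c*z)*t by ring, hcz]; ring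
    simp only
    rw [h1, Real.mul_rpow hz.le (le_of_lt ht), neg_mul]
    ring
  rw [setIntegral_congr_fun measurableSet_Ioi hgz, integral_const_mul]
  have habs : |(N_T:ℝ) - N_R| = (N_T:ℝ) - N_R :=
    abs_of_nonneg (sub_nonneg.mpr (by exact_mod_cast h))
  have hexp : (N_T:ℝ) - N_R + 1 - N_T - 1 = -(N_R:ℝ) := by ring
  rw [tricomiU, habs, hexp]
  have hzpow : z ^ ((N_T:ℝ)-1) * z = z ^ (N_T:ℕ) := by
    have h2 := Real.rpow_add hz ((N_T:ℝ)-1) 1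
    rw [Real.rpow_one] at h2
    rw [← h2, show (N_T:ℝ) - 1 + 1 = (N_T:ℝ) by ring, Real.rpow_natCast]
  rw [← hzpow]
  ring
end
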